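/- Let f : (X,A) → (Y,B) be a map of CW pairs with X path-connected. Then f admits a relative categorical sequence of length n if and only if relcat(f) ≤ n. -/

import Mathlib

open Set unitInterval

section Defs

variable {X : Type*} {Y : Type*} [TopologicalSpace X] [TopologicalSpace Y]

/-- The restriction of `f` to `V` is null-homotopic. -/
def NullhomotopicOn (f : X → Y) (V : Set X) : Prop :=
  ∃ (H : C(unitInterval × ↥V, Y)) (y : Y),
    (∀ x : ↥V, H (1, x) = f x) ∧ (∀ x : ↥V, H (0, x) = y)

/-- The restriction of `f` to `V` is homotopic to a map with values in `A`. -/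
def DeformsIntoOn (f : X → Y) (V : Set X) (A : Set Y) : Prop :=
  ∃ H : C(unitInterval × ↥V, Y),
    (∀ x : ↥V, H (1, x) = f x) ∧ (∀ x : ↥V, H (0, x) ∈ A)

/-- There is a homotopy of pairs `(V × I, (V ∩ A) × I) → (Y, B)` ending at `f|_V`
and starting at a map into `B`. -/
def RelPairDeform (f : X → Y) (V A : Set X) (B : Set Y) : Prop :=
  ∃ H : C(unitInterval × ↥V, Y),
    (∀ x : ↥V, H (1, x) = f x) ∧ (∀ x : ↥V, H (0, x) ∈ B) ∧
    (∀ (t : unitInterval) (x : ↥V), (x : X) ∈ A → H (t, x) ∈ B)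

/-- `relcat f A B ≤ n` : covering by `n+1` open sets as in the definition of the
relative category of a map of pairs `f : (X,A) → (Y,B)`. -/
def relcatLE (f : X → Y) (A : Set X) (B : Set Y) (n : ℕ) : Prop :=
  ∃ V : Fin (n + 1) → Set X, (∀ i, IsOpen (V i)) ∧ (⋃ i, V i) = Set.univ ∧
    A ⊆ V 0 ∧ (∀ i, i ≠ 0 → NullhomotopicOn f (V i)) ∧ RelPairDeform f (V 0) A B

/-- The relative category of a map of pairs `f : (X,A) → (Y,B)` (`⊤` if none exists). -/
noncomputable def relcat (f : X → Y) (A : Set X) (B : Set Y) : ℕ∞ :=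
  sInf {n : ℕ∞ | ∃ m : ℕ, n = (m : ℕ∞) ∧ relcatLE f A B m}

/-- `qscat f A ≤ n` : covering by `n+1` open sets on each of which `f` deforms into `A`. -/
def qscatLE (f : X → Y) (A : Set Y) (n : ℕ) : Prop :=
  ∃ V : Fin (n + 1) → Set X, (∀ i, IsOpen (V i)) ∧ (⋃ i, V i) = Set.univ ∧
    ∀ i, DeformsIntoOn f (V i) A

/-- The quasi-strong LS category of a map of pairs `f : (B,C) → (X,A)`. -/
noncomputable def qscat (f : X → Y) (A : Set Y) : ℕ∞ :=
  sInf {n : ℕ∞ | ∃ m : ℕ, n = (m : ℕ∞) ∧ qscatLE f A m}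

/-- The restriction of `f : (X,C) → (Y,A)` to `(V, V ∩ C)` is strongly relatively
inessential. -/
def StronglyRelInessentialOn (f : X → Y) (V C : Set X) (A : Set Y) : Prop :=
  ∃ H : C(unitInterval × ↥V, Y),
    (∀ x : ↥V, H (1, x) = f x) ∧ (∀ x : ↥V, H (0, x) ∈ A) ∧
    (∀ (t : unitInterval) (x : ↥V), (x : X) ∈ C → H (t, x) = f x)

/-- `srelcat f C A ≤ n`. -/
def srelcatLE (f : X → Y) (C : Set X) (A : Set Y) (n : ℕ) : Prop :=
  ∃ V : Fin (n + 1) → Set X, (∀ i, IsOpen (V i)) ∧ (⋃ i, V i) = Set.univ ∧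
    ∀ i, StronglyRelInessentialOn f (V i) C A

/-- The strong relative LS category of a map of pairs `f : (B,C) → (X,A)`. -/
noncomputable def srelcat (f : X → Y) (C : Set X) (A : Set Y) : ℕ∞ :=
  sInf {n : ℕ∞ | ∃ m : ℕ, n = (m : ℕ∞) ∧ srelcatLE f C A m}

/-- `catMap f ≤ n` : covering by `n+1` open sets on each of which `f` is null-homotopic. -/
def catMapLE (f : X → Y) (n : ℕ) : Prop :=
  ∃ V : Fin (n + 1) → Set X, (∀ i, IsOpen (V i)) ∧ (⋃ i, V i) = Set.univ ∧
    ∀ i, NullhomotopicOn f (V i)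

/-- The LS category of a map. -/
noncomputable def catMap (f : X → Y) : ℕ∞ :=
  sInf {n : ℕ∞ | ∃ m : ℕ, n = (m : ℕ∞) ∧ catMapLE f m}

end Defs

/-- The `n`-th (higher) topological complexity of a map `f : X → Y`:
`qscat` of the induced map of pairs `(Xⁿ, Δₙ(X)) → (Yⁿ, Δₙ(Y))`. -/
noncomputable def TCmap (n : ℕ) {X Y : Type*} [TopologicalSpace X] [TopologicalSpace Y]
    (f : X → Y) : ℕ∞ :=
  qscat (fun x : Fin n → X => fun i => f (x i)) {y : Fin n → Y | ∀ i j, y i = y j}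

/-- A relative categorical sequence of length `n` for `f : (X,A) → (Y,B)`. -/
def RelCatSeq {X Y : Type*} [TopologicalSpace X] [TopologicalSpace Y]
    (f : X → Y) (A : Set X) (B : Set Y) (n : ℕ) : Prop :=
  ∃ P : Fin (n + 1) → Set X, (∀ i, IsOpen (P i)) ∧ Monotone P ∧
    P (Fin.last n) = Set.univ ∧ A ⊆ P 0 ∧
    (∀ i : Fin n, ∃ V : Set X, IsOpen V ∧ P i.succ \ P i.castSucc ⊆ V ∧
      NullhomotopicOn f V) ∧
    RelPairDeform f (P 0) A B

/-- for `f : (X,A) → (Y,B)` with `X` path-connected, `f` has a relative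
categorical sequence of length `n` iff `relcat f ≤ n`. -/
lemma nullhomotopicOn_empty {X Y : Type*} [TopologicalSpace X] [TopologicalSpace Y]
    (f : X → Y) (y : Y) : NullhomotopicOn f (∅ : Set X) :=
  ⟨ContinuousMap.const _ y, y, fun x => absurd x.2 (Set.notMem_empty _), fun _ => rfl⟩

theorem relCatSeq_iff_relcat_le {X Y : Type*} [TopologicalSpace X] [TopologicalSpace Y]
    [PathConnectedSpace X] {A : Set X} {B : Set Y}
    (f : X → Y) (hf : Continuous f) (hfAB : Set.MapsTo f A B) (n : ℕ) :
    RelCatSeq f A B n ↔ relcat f A B ≤ (n : ℕ∞) := by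
  constructor
  · rintro ⟨P, hPopen, hPmono, hPlast, hPA, hdiff, hdef⟩
    have key : relcatLE f A B n := by
      choose V hVopen hVsub hVnull using hdiff
      refine ⟨Fin.cases (P 0) V, ?_, ?_, ?_, ?_, ?_⟩
      · intro i
        induction i using Fin.cases with
        | zero => simpa using hPopen 0
        | succ j => simpa using hVopen j
      · apply Set.eq_univ_of_univ_subset
        rw [← hPlast]
        have main : ∀ k : ℕ, ∀ hk : k < n + 1,
            P ⟨k, hk⟩ ⊆ ⋃ i, Fin.cases (P 0) V i := by
          intro k
          induction k with
          | zero =>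
            intro hk x hx
            exact Set.mem_iUnion.2 ⟨0, hx⟩
          | succ k ih =>
            intro hk x hx
            have hkn : k < n := Nat.lt_of_succ_lt_succ hk
            by_cases hxk : x ∈ P ⟨k, Nat.lt_of_lt_of_le hkn (Nat.le_succ n)⟩
            · exact ih _ hxk
            · have hsucc : (⟨k, hkn⟩ : Fin n).succ = ⟨k + 1, hk⟩ := rfl
              have hcast : (⟨k, hkn⟩ : Fin n).castSucc
                  = ⟨k, Nat.lt_of_lt_of_le hkn (Nat.le_succ n)⟩ := rfl
              have : x ∈ V ⟨k, hkn⟩ := hVsub ⟨k, hkn⟩ (by rw [hsucc, hcast]; exact ⟨hx, hxk⟩)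
              refine Set.mem_iUnion.2 ⟨(⟨k, hkn⟩ : Fin n).succ, ?_⟩
              simpa using this
        have : (Fin.last n) = ⟨n, Nat.lt_succ_self n⟩ := rfl
        rw [this]
        exact main n (Nat.lt_succ_self n)
      · simpa using hPA
      · intro i hi
        induction i using Fin.cases with
        | zero => exact absurd rfl hi
        | succ j => simpa using hVnull j
      · simpa using hdef
    exact sInf_le ⟨n, rfl, key⟩
  · intro h
    have hmem : ∃ m : ℕ, m ≤ n ∧ relcatLE f A B m := by
      by_contra hcon
      push_neg at hcon
      have : (n : ℕ∞) + 1 ≤ relcat f A B := by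
        apply le_sInf
        rintro x ⟨m, rfl, hm⟩
        have : n < m := by
          by_contra hnm
          exact hcon m (Nat.le_of_not_lt hnm) hm
        exact_mod_cast Nat.succ_le_of_lt this
      exact absurd (this.trans h) (by exact_mod_cast Nat.not_succ_le_self n)
    obtain ⟨m, hmn, V, hVopen, hVcover, hVA, hVnull, hVdef⟩ := hmem
    set P : Fin (n + 1) → Set X :=
      fun i => ⋃ j : Fin (m + 1), ⋃ (_ : (j : ℕ) ≤ (i : ℕ)), V j with hP
    have hP0 : P 0 = V 0 := by
      apply Set.Subset.antisymm
      · intro x hx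
        obtain ⟨j, hj, hxj⟩ := Set.mem_iUnion₂.1 hx
        have : j = 0 := Fin.ext (by simpa using hj)
        rwa [this] at hxj
      · intro x hx
        exact Set.mem_iUnion.2 ⟨0, Set.mem_iUnion.2 ⟨Nat.zero_le _, hx⟩⟩
    refine ⟨P, ?_, ?_, ?_, ?_, ?_, ?_⟩
    · intro i
      exact isOpen_iUnion fun j => isOpen_iUnion fun _ => hVopen j
    · intro i i' hii' x hx
      obtain ⟨j, hj, hxj⟩ := by simpa [hP, Set.mem_iUnion] using hx
      exact Set.mem_iUnion.2 ⟨j, Set.mem_iUnion.2 ⟨hj.trans hii', hxj⟩⟩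
    · apply Set.eq_univ_of_univ_subset
      intro x _
      have : x ∈ ⋃ j, V j := hVcover ▸ Set.mem_univ x
      obtain ⟨j, hxj⟩ := Set.mem_iUnion.1 this
      refine Set.mem_iUnion.2 ⟨j, Set.mem_iUnion.2 ⟨?_, hxj⟩⟩
      simp [Fin.last]
      exact (Nat.lt_succ_iff.mp j.2).trans hmn
    · rw [hP0]; exact hVA
    · intro i
      by_cases h1 : (i : ℕ) + 1 ≤ m
      · refine ⟨V ⟨(i : ℕ) + 1, Nat.lt_succ_of_le h1⟩, hVopen _, ?_, ?_⟩
        · rintro x ⟨hx1, hx2⟩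
          obtain ⟨j, hj, hxj⟩ := by simpa [hP, Set.mem_iUnion] using hx1
          rcases Nat.lt_or_ge (j : ℕ) ((i : ℕ) + 1) with hlt | hge
          · exact absurd (Set.mem_iUnion.2 ⟨j, Set.mem_iUnion.2
              ⟨Nat.lt_succ_iff.mp (by simpa using hlt), hxj⟩⟩) hx2
          · have : j = ⟨(i : ℕ) + 1, Nat.lt_succ_of_le h1⟩ :=
              Fin.ext (le_antisymm hj hge)
            rwa [this] at hxj
        · exact hVnull _ (by simp [Fin.ext_iff])
      · refine ⟨∅, isOpen_empty, ?_, ?_⟩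
        · rintro x ⟨hx1, hx2⟩
          exfalso
          apply hx2
          obtain ⟨j, hj, hxj⟩ := by simpa [hP, Set.mem_iUnion] using hx1
          refine Set.mem_iUnion.2 ⟨j, Set.mem_iUnion.2 ⟨?_, hxj⟩⟩
          have hjm : (j : ℕ) ≤ m := Nat.lt_succ_iff.mp j.2
          exact Nat.lt_succ_iff.mp (Nat.lt_of_le_of_lt hjm (Nat.lt_of_not_le h1))
        · exact nullhomotopicOn_empty f (f (Classical.arbitrary X))
    · rw [hP0]; exact hVdef
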